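/- Let V be a purely even restricted vertex algebra with A = V₀, Ω ⊂ V₁ the span of elements a∂b (a, b ∈ A), and 𝒯 = V₁/Ω. Then the operation _{(0)}: V₁ ⊗ V₁ → V₁ descends to a skew-symmetric bracket on 𝒯 satisfying the Jacobi identity, making 𝒯 a Lie algebra. -/

import Mathlib

open scoped BigOperators

/-- The generalized binomial coefficient `C(m, j)` for `m ∈ ℤ`, as a complex number. -/
noncomputable def binom (m : ℤ) (j : ℕ) : ℂ :=
  (∏ i ∈ Finset.range j, ((m : ℂ) - (i : ℂ))) / (Nat.factorial j : ℂ)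

/-- A purely even restricted graded vertex algebra: a vertex algebra (vacuum, Fourier modes
`coeff a n = a_{(n)}`, translation operator `T = ∂`, vacuum axiom, translation invariance and
the Borcherds identity) together with a grading by conformal weights `wt : ℤ → Submodule ℂ V`
(the eigenspace decomposition of the Hamiltonian `H`), with no negative conformal weights,
`vac` of weight `0`, and such that `a_{(n)} : V_Δ ⊗ V_{Δ'} → V_{Δ+Δ'-n-1}`. -/
structure RestrictedVA (V : Type*) [AddCommGroup V] [Module ℂ V] where
  vac : V
  coeff : V → ℤ → Module.End ℂ V
  T : Module.End ℂ V
  wt : ℤ → Submodule ℂ V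
  coeff_add : ∀ (a b : V) (n : ℤ), coeff (a + b) n = coeff a n + coeff b n
  coeff_smul : ∀ (c : ℂ) (a : V) (n : ℤ), coeff (c • a) n = c • coeff a n
  truncation : ∀ a b : V, ∃ N : ℤ, ∀ n ≥ N, coeff a n b = 0
  vac_field : ∀ n : ℤ, coeff vac n = if n = -1 then (1 : Module.End ℂ V) else 0
  T_vac : T vac = 0
  creation_nonneg : ∀ (a : V) (n : ℤ), 0 ≤ n → coeff a n vac = 0
  creation_neg_one : ∀ a : V, coeff a (-1) vac = a
  translation : ∀ (a : V) (n : ℤ),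
    T * coeff a n - coeff a n * T = ((-n : ℤ) : ℂ) • coeff a (n - 1)
  borcherds : ∀ (a b c : V) (m n k : ℤ),
    (∑ᶠ j : ℕ, binom m j • coeff (coeff a (n + j) b) (m + k - j) c) =
      (∑ᶠ j : ℕ, ((-1 : ℂ) ^ j * binom n j) • coeff a (n + m - j) (coeff b (k + j) c)) -
      (∑ᶠ j : ℕ, ((-1 : ℂ) ^ ((j : ℤ) + n) * binom n j) •
        coeff b (n + k - j) (coeff a (m + j) c))
  wt_neg : ∀ d : ℤ, d < 0 → wt d = ⊥
  vac_wt : vac ∈ wt 0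
  wt_indep : ∀ d : ℤ, Disjoint (wt d) (⨆ (e : ℤ) (_ : e ≠ d), wt e)
  wt_top : (⨆ d : ℤ, wt d) = ⊤
  wt_coeff : ∀ {a b : V} {d e : ℤ} (n : ℤ),
    a ∈ wt d → b ∈ wt e → coeff a n b ∈ wt (d + e - n - 1)

/-- The subspace `Ω ⊆ V₁` spanned by the elements `a ∂b` with `a, b ∈ A = V₀`
(the product being `a_{(-1)}`). -/
def RestrictedVA.Omega {V : Type*} [AddCommGroup V] [Module ℂ V] (W : RestrictedVA V) :
    Submodule ℂ V :=
  Submodule.span ℂ {x | ∃ a b : V, a ∈ W.wt 0 ∧ b ∈ W.wt 0 ∧ x = W.coeff a (-1) (W.T b)}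


lemma binom_zero_right (m : ℤ) : binom m 0 = 1 := by simp [binom]

lemma binom_succ (m : ℤ) (j : ℕ) :
    binom m (j + 1) = binom m j * ((m : ℂ) - j) / (j + 1) := by
  have h1 : ((Nat.factorial j : ℂ)) ≠ 0 := Nat.cast_ne_zero.mpr (Nat.factorial_ne_zero j)
  have h2 : ((j : ℂ) + 1) ≠ 0 := Nat.cast_add_one_ne_zero j
  have hf : ((Nat.factorial (j + 1) : ℂ)) = ((j : ℂ) + 1) * (Nat.factorial j : ℂ) := by
    rw [Nat.factorial_succ]; push_cast; ring
  simp only [binom, Finset.prod_range_succ, hf]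
  rw [div_mul_eq_mul_div, div_div, mul_comm ((j : ℂ) + 1)]

lemma binom_zero_ne (j : ℕ) (hj : j ≠ 0) : binom 0 j = 0 := by
  have h0 : (0 : ℕ) ∈ Finset.range j := Finset.mem_range.mpr (Nat.pos_of_ne_zero hj)
  simp only [binom]
  rw [Finset.prod_eq_zero h0 (by norm_num), zero_div]

lemma binom_one_one : binom 1 1 = 1 := by simp [binom]

lemma binom_one_ge (j : ℕ) (hj : 2 ≤ j) : binom 1 j = 0 := by
  have h0 : (1 : ℕ) ∈ Finset.range j := Finset.mem_range.mpr (by omega)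
  simp only [binom]
  rw [Finset.prod_eq_zero h0 (by norm_num), zero_div]

lemma binom_neg_one (j : ℕ) : binom (-1) j = (-1 : ℂ) ^ j := by
  induction j with
  | zero => simp [binom_zero_right]
  | succ n ih =>
    rw [binom_succ, ih]
    have h2 : ((n : ℂ) + 1) ≠ 0 := Nat.cast_add_one_ne_zero n
    field_simp
    ring

lemma binom_neg_two (j : ℕ) : binom (-2) j = (-1 : ℂ) ^ j * ((j : ℂ) + 1) := by
  induction j with
  | zero => simp [binom_zero_right]
  | succ n ih =>
    rw [binom_succ, ih]
    have h2 : ((n : ℂ) + 1) ≠ 0 := Nat.cast_add_one_ne_zero n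
    field_simp
    push_cast
    ring

namespace RestrictedVA
variable {V : Type*} [AddCommGroup V] [Module ℂ V] (W : RestrictedVA V)

lemma coeff_zero_left (n : ℤ) : W.coeff 0 n = 0 := by
  have h := W.coeff_smul 0 0 n
  rw [zero_smul, zero_smul] at h
  exact h

lemma eq_zero_of_wt_neg {a : V} {d : ℤ} (h : a ∈ W.wt d) (hd : d < 0) : a = 0 := by
  rw [W.wt_neg d hd, Submodule.mem_bot] at h
  exact h

lemma T_eq (b : V) : W.T b = W.coeff b (-2) W.vac := by
  have h := congrFun (congrArg DFunLike.coe (W.translation b (-1))) W.vac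
  simp only [Module.End.mul_apply, LinearMap.sub_apply, LinearMap.smul_apply] at h
  rw [W.creation_neg_one, W.T_vac, map_zero] at h
  norm_num at h
  exact h

lemma T_mem_wt {b : V} (h : b ∈ W.wt 0) : W.T b ∈ W.wt 1 := by
  rw [W.T_eq]
  have := W.wt_coeff (-2) h W.vac_wt
  norm_num at this
  exact this

lemma T_mem_Omega {c : V} (h : c ∈ W.wt 0) : W.T c ∈ W.Omega := by
  apply Submodule.subset_span
  exact ⟨W.vac, c, W.vac_wt, h, by rw [W.vac_field]; norm_num⟩

lemma vac_apply_ne {n : ℤ} (hn : n ≠ -1) (c : V) : W.coeff W.vac n c = 0 := by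
  rw [W.vac_field, if_neg hn]; rfl

lemma vac_apply_eq (c : V) : W.coeff W.vac (-1) c = c := by
  rw [W.vac_field, if_pos rfl]; rfl

lemma coeff_T (a c : V) (k : ℤ) :
    W.coeff (W.T a) k c = ((-k : ℤ) : ℂ) • W.coeff a (k - 1) c := by
  have hb := W.borcherds a W.vac c 0 (-2) k
  have hL : (∑ᶠ j : ℕ, binom 0 j • W.coeff (W.coeff a (-2 + j) W.vac) (0 + k - j) c)
      = W.coeff (W.T a) k c := by
    rw [finsum_eq_single _ 0 (fun x hx => by rw [binom_zero_ne x hx, zero_smul])]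
    have e1 : (-2 + ((0 : ℕ) : ℤ)) = -2 := by norm_num
    have e2 : (0 + k - ((0 : ℕ) : ℤ)) = k := by norm_num
    rw [binom_zero_right, one_smul, e1, e2, ← W.T_eq]
  rw [hL] at hb
  rcases lt_trichotomy k 0 with hk | hk | hk
  · -- k ≤ -1
    set j₀ : ℕ := (-1 - k).toNat with hj₀def
    have hj₀ : (j₀ : ℤ) = -1 - k := Int.toNat_of_nonneg (by omega)
    have hR1 : (∑ᶠ j : ℕ, ((-1 : ℂ) ^ j * binom (-2) j) •
        W.coeff a (-2 + 0 - j) (W.coeff W.vac (k + j) c))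
        = ((-k : ℤ) : ℂ) • W.coeff a (k - 1) c := by
      rw [finsum_eq_single _ j₀ (fun x hx => by
        have hxk : k + (x : ℤ) ≠ -1 := by
          intro hcon
          exact hx (by omega)
        rw [W.vac_apply_ne hxk, map_zero, smul_zero])]
      have e1 : k + (j₀ : ℤ) = -1 := by omega
      have e2 : (-2 + 0 - (j₀ : ℤ)) = k - 1 := by omega
      rw [e1, W.vac_apply_eq, e2, binom_neg_two, ← mul_assoc, ← mul_pow]
      norm_num
      rw [← neg_smul]
      congr 1
      have h5 : (j₀ : ℤ) + 1 = -k := by omega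
      have h6 := congrArg (Int.cast : ℤ → ℂ) h5
      push_cast at h6
      linear_combination h6
    have hR2 : (∑ᶠ j : ℕ, ((-1 : ℂ) ^ ((j : ℤ) + (-2)) * binom (-2) j) •
        W.coeff W.vac (-2 + k - j) (W.coeff a (0 + j) c)) = 0 := by
      apply finsum_eq_zero_of_forall_eq_zero
      intro x
      have hxk : (-2 + k - (x : ℤ)) ≠ -1 := by omega
      rw [W.vac_apply_ne hxk, smul_zero]
    rw [hR1, hR2, sub_zero] at hb
    exact hb
  · -- k = 0
    subst hk
    have hR1 : (∑ᶠ j : ℕ, ((-1 : ℂ) ^ j * binom (-2) j) •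
        W.coeff a (-2 + 0 - j) (W.coeff W.vac (0 + j) c)) = 0 := by
      apply finsum_eq_zero_of_forall_eq_zero
      intro x
      have hxk : ((0 : ℤ) + (x : ℤ)) ≠ -1 := by omega
      rw [W.vac_apply_ne hxk, map_zero, smul_zero]
    have hR2 : (∑ᶠ j : ℕ, ((-1 : ℂ) ^ ((j : ℤ) + (-2)) * binom (-2) j) •
        W.coeff W.vac (-2 + 0 - j) (W.coeff a (0 + j) c)) = 0 := by
      apply finsum_eq_zero_of_forall_eq_zero
      intro x
      have hxk : (-2 + 0 - (x : ℤ)) ≠ -1 := by omega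
      rw [W.vac_apply_ne hxk, smul_zero]
    rw [hR1, hR2, sub_zero] at hb
    rw [hb]
    norm_num
  · -- k ≥ 1
    set j₀ : ℕ := (k - 1).toNat with hj₀def
    have hj₀ : (j₀ : ℤ) = k - 1 := Int.toNat_of_nonneg (by omega)
    have hR1 : (∑ᶠ j : ℕ, ((-1 : ℂ) ^ j * binom (-2) j) •
        W.coeff a (-2 + 0 - j) (W.coeff W.vac (k + j) c)) = 0 := by
      apply finsum_eq_zero_of_forall_eq_zero
      intro x
      have hxk : (k + (x : ℤ)) ≠ -1 := by omega
      rw [W.vac_apply_ne hxk, map_zero, smul_zero]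
    have hR2 : (∑ᶠ j : ℕ, ((-1 : ℂ) ^ ((j : ℤ) + (-2)) * binom (-2) j) •
        W.coeff W.vac (-2 + k - j) (W.coeff a (0 + j) c))
        = ((k : ℤ) : ℂ) • W.coeff a (k - 1) c := by
      rw [finsum_eq_single _ j₀ (fun x hx => by
        have hxk : (-2 + k - (x : ℤ)) ≠ -1 := by
          intro hcon
          exact hx (by omega)
        rw [W.vac_apply_ne hxk, smul_zero])]
      have e1 : (-2 + k - (j₀ : ℤ)) = -1 := by omega
      have e2 : (0 + (j₀ : ℤ)) = k - 1 := by omega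
      have hz : (-1 : ℂ) ^ ((j₀ : ℤ) + (-2)) = (-1 : ℂ) ^ j₀ := by
        rw [zpow_add₀ (by norm_num : (-1 : ℂ) ≠ 0), zpow_natCast]
        norm_num
      rw [e1, W.vac_apply_eq, e2, hz, binom_neg_two, ← mul_assoc, ← mul_pow]
      norm_num
      congr 1
      have h5 : (j₀ : ℤ) + 1 = k := by omega
      have h6 := congrArg (Int.cast : ℤ → ℂ) h5
      push_cast at h6
      linear_combination h6
    rw [hR1, hR2, zero_sub, ← neg_smul] at hb
    rw [hb]
    push_cast
    ring_nf

lemma skew {a b : V} (ha : a ∈ W.wt 1) (hb : b ∈ W.wt 1) :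
    W.coeff a 0 b + W.coeff b 0 a = W.T (W.coeff a 1 b) := by
  have hbor := W.borcherds a b W.vac (-1) 1 (-1)
  have hL : (∑ᶠ j : ℕ, binom (-1) j • W.coeff (W.coeff a (1 + j) b) (-1 + -1 - j) W.vac)
      = W.T (W.coeff a 1 b) := by
    rw [finsum_eq_single _ 0 (fun x hx => by
      have hx1 : 1 ≤ x := Nat.one_le_iff_ne_zero.mpr hx
      have hz : W.coeff a (1 + (x : ℤ)) b = 0 :=
        W.eq_zero_of_wt_neg (W.wt_coeff _ ha hb) (by omega)
      rw [hz, W.coeff_zero_left]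
      simp)]
    have e1 : (1 + ((0 : ℕ) : ℤ)) = 1 := by norm_num
    have e2 : (-1 + -1 - ((0 : ℕ) : ℤ)) = -2 := by norm_num
    rw [e1, e2, ← W.T_eq, binom_neg_one, pow_zero, one_smul]
  have hR1 : (∑ᶠ j : ℕ, ((-1 : ℂ) ^ j * binom 1 j) •
      W.coeff a (1 + -1 - j) (W.coeff b (-1 + j) W.vac)) = W.coeff a 0 b := by
    rw [finsum_eq_single _ 0 (fun x hx => by
      rcases Nat.lt_or_ge x 2 with h2 | h2
      · interval_cases x
        · exact absurd rfl hx
        · have e : (-1 + ((1 : ℕ) : ℤ)) = 0 := by norm_num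
          rw [e, W.creation_nonneg b 0 le_rfl, map_zero, smul_zero]
      · rw [binom_one_ge x h2, mul_zero, zero_smul])]
    have e1 : (1 + -1 - ((0 : ℕ) : ℤ)) = 0 := by norm_num
    have e2 : (-1 + ((0 : ℕ) : ℤ)) = -1 := by norm_num
    rw [e1, e2, W.creation_neg_one, binom_zero_right, pow_zero, one_mul, one_smul]
  have hR2 : (∑ᶠ j : ℕ, ((-1 : ℂ) ^ ((j : ℤ) + 1) * binom 1 j) •
      W.coeff b (1 + -1 - j) (W.coeff a (-1 + j) W.vac)) = -(W.coeff b 0 a) := by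
    rw [finsum_eq_single _ 0 (fun x hx => by
      rcases Nat.lt_or_ge x 2 with h2 | h2
      · interval_cases x
        · exact absurd rfl hx
        · have e : (-1 + ((1 : ℕ) : ℤ)) = 0 := by norm_num
          rw [e, W.creation_nonneg a 0 le_rfl, map_zero, smul_zero]
      · rw [binom_one_ge x h2, mul_zero, zero_smul])]
    have e1 : (1 + -1 - ((0 : ℕ) : ℤ)) = 0 := by norm_num
    have e2 : (-1 + ((0 : ℕ) : ℤ)) = -1 := by norm_num
    have e3 : (-1 : ℂ) ^ (((0 : ℕ) : ℤ) + 1) = -1 := by norm_num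
    rw [e1, e2, W.creation_neg_one, binom_zero_right, e3, mul_one, neg_one_smul]
  rw [hL, hR1, hR2, sub_neg_eq_add] at hbor
  exact hbor.symm

lemma comm0 {u w : V} (hu : u ∈ W.wt 0) (hw : w ∈ W.wt 0) :
    W.coeff (W.T u) (-1) w ∈ W.Omega := by
  have hbor := W.borcherds (W.T u) w W.vac (-1) 0 (-1)
  have hL : (∑ᶠ j : ℕ, binom (-1) j •
      W.coeff (W.coeff (W.T u) (0 + j) w) (-1 + -1 - j) W.vac) = 0 := by
    apply finsum_eq_zero_of_forall_eq_zero
    intro x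
    have hz : W.coeff (W.T u) (0 + (x : ℤ)) w = 0 := by
      rw [W.coeff_T]
      rcases Nat.eq_zero_or_pos x with h0 | h0
      · subst h0; norm_num
      · rw [W.eq_zero_of_wt_neg (W.wt_coeff _ hu hw) (by omega), smul_zero]
    rw [hz, W.coeff_zero_left]
    simp
  have hR1 : (∑ᶠ j : ℕ, ((-1 : ℂ) ^ j * binom 0 j) •
      W.coeff (W.T u) (0 + -1 - j) (W.coeff w (-1 + j) W.vac))
      = W.coeff (W.T u) (-1) w := by
    rw [finsum_eq_single _ 0 (fun x hx => by
      rw [binom_zero_ne x hx, mul_zero, zero_smul])]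
    have e1 : (0 + -1 - ((0 : ℕ) : ℤ)) = -1 := by norm_num
    have e2 : (-1 + ((0 : ℕ) : ℤ)) = -1 := by norm_num
    rw [e1, e2, W.creation_neg_one, binom_zero_right, pow_zero, one_mul, one_smul]
  have hR2 : (∑ᶠ j : ℕ, ((-1 : ℂ) ^ ((j : ℤ) + 0) * binom 0 j) •
      W.coeff w (0 + -1 - j) (W.coeff (W.T u) (-1 + j) W.vac))
      = W.coeff w (-1) (W.T u) := by
    rw [finsum_eq_single _ 0 (fun x hx => by
      rw [binom_zero_ne x hx, mul_zero, zero_smul])]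
    have e1 : (0 + -1 - ((0 : ℕ) : ℤ)) = -1 := by norm_num
    have e2 : (-1 + ((0 : ℕ) : ℤ)) = -1 := by norm_num
    have e3 : (-1 : ℂ) ^ (((0 : ℕ) : ℤ) + 0) = 1 := by norm_num
    rw [e1, e2, W.creation_neg_one, binom_zero_right, e3, mul_one, one_smul]
  rw [hL, hR1, hR2] at hbor
  have heq : W.coeff (W.T u) (-1) w = W.coeff w (-1) (W.T u) := by
    have := hbor.symm
    rw [sub_eq_zero] at this
    exact this
  rw [heq]
  exact Submodule.subset_span ⟨w, u, hw, hu, rfl⟩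

lemma mem_wt_zero_coeff {u c : V} (hu : u ∈ W.wt 0) (hc : c ∈ W.wt 1) :
    W.coeff u 0 c ∈ W.wt 0 := by
  have := W.wt_coeff 0 hu hc
  norm_num at this
  exact this

lemma gen_act {a u c : V} (ha : a ∈ W.wt 0) (hu : u ∈ W.wt 0) (hc : c ∈ W.wt 1) :
    W.coeff (W.coeff a (-1) (W.T u)) 0 c ∈ W.Omega := by
  have hbor := W.borcherds a (W.T u) c 0 (-1) 0
  have hL : (∑ᶠ j : ℕ, binom 0 j • W.coeff (W.coeff a (-1 + j) (W.T u)) (0 + 0 - j) c)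
      = W.coeff (W.coeff a (-1) (W.T u)) 0 c := by
    rw [finsum_eq_single _ 0 (fun x hx => by
      rw [binom_zero_ne x hx, zero_smul])]
    have e1 : (-1 + ((0 : ℕ) : ℤ)) = -1 := by norm_num
    have e2 : (0 + 0 - ((0 : ℕ) : ℤ)) = 0 := by norm_num
    rw [e1, e2, binom_zero_right, one_smul]
  have hR1 : (∑ᶠ j : ℕ, ((-1 : ℂ) ^ j * binom (-1) j) •
      W.coeff a (-1 + 0 - j) (W.coeff (W.T u) (0 + j) c))
      = -(W.coeff a (-2) (W.coeff u 0 c)) := by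
    rw [finsum_eq_single _ 1 (fun x hx => by
      rcases Nat.eq_zero_or_pos x with h0 | h0
      · subst h0
        have hz : W.coeff (W.T u) (0 + ((0 : ℕ) : ℤ)) c = 0 := by
          rw [W.coeff_T]; norm_num
        rw [hz, map_zero, smul_zero]
      · have hx2 : 2 ≤ x := by omega
        have hz : W.coeff (W.T u) (0 + (x : ℤ)) c = 0 := by
          rw [W.coeff_T,
            W.eq_zero_of_wt_neg (W.wt_coeff _ hu hc) (by omega), smul_zero]
        rw [hz, map_zero, smul_zero])]
    have e0 : W.coeff (W.T u) (0 + ((1 : ℕ) : ℤ)) c = ((-1 : ℤ) : ℂ) • W.coeff u 0 c := by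
      rw [W.coeff_T]
      norm_num
    have e1 : (-1 + 0 - ((1 : ℕ) : ℤ)) = -2 := by norm_num
    rw [e0, e1, binom_neg_one, map_smul]
    norm_num
  have hR2 : (∑ᶠ j : ℕ, ((-1 : ℂ) ^ ((j : ℤ) + (-1)) * binom (-1) j) •
      W.coeff (W.T u) (-1 + 0 - j) (W.coeff a (0 + j) c))
      = -(W.coeff (W.T u) (-1) (W.coeff a 0 c)) := by
    rw [finsum_eq_single _ 0 (fun x hx => by
      have hx1 : 1 ≤ x := Nat.one_le_iff_ne_zero.mpr hx
      have hz : W.coeff a (0 + (x : ℤ)) c = 0 :=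
        W.eq_zero_of_wt_neg (W.wt_coeff _ ha hc) (by omega)
      rw [hz, map_zero, smul_zero])]
    have e1 : (-1 + 0 - ((0 : ℕ) : ℤ)) = -1 := by norm_num
    have e2 : (0 + ((0 : ℕ) : ℤ)) = 0 := by norm_num
    have e3 : (-1 : ℂ) ^ (((0 : ℕ) : ℤ) + (-1)) = -1 := by norm_num
    rw [e1, e2, e3, binom_zero_right, mul_one, neg_one_smul]
  rw [hL, hR1, hR2, sub_neg_eq_add] at hbor
  rw [hbor]
  apply Submodule.add_mem
  · apply Submodule.neg_mem
    have h1 : W.coeff a (-2) (W.coeff u 0 c) = W.coeff (W.T a) (-1) (W.coeff u 0 c) := by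
      rw [W.coeff_T]
      norm_num
    rw [h1]
    exact W.comm0 ha (W.mem_wt_zero_coeff hu hc)
  · exact W.comm0 hu (W.mem_wt_zero_coeff ha hc)

lemma deriv0 (x y z : V) :
    W.coeff (W.coeff x 0 y) 0 z
      = W.coeff x 0 (W.coeff y 0 z) - W.coeff y 0 (W.coeff x 0 z) := by
  have hbor := W.borcherds x y z 0 0 0
  have hL : (∑ᶠ j : ℕ, binom 0 j • W.coeff (W.coeff x (0 + j) y) (0 + 0 - j) z)
      = W.coeff (W.coeff x 0 y) 0 z := by
    rw [finsum_eq_single _ 0 (fun t ht => by rw [binom_zero_ne t ht, zero_smul])]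
    have e1 : (0 + ((0 : ℕ) : ℤ)) = 0 := by norm_num
    have e2 : (0 + 0 - ((0 : ℕ) : ℤ)) = 0 := by norm_num
    rw [e1, e2, binom_zero_right, one_smul]
  have hR1 : (∑ᶠ j : ℕ, ((-1 : ℂ) ^ j * binom 0 j) •
      W.coeff x (0 + 0 - j) (W.coeff y (0 + j) z))
      = W.coeff x 0 (W.coeff y 0 z) := by
    rw [finsum_eq_single _ 0 (fun t ht => by
      rw [binom_zero_ne t ht, mul_zero, zero_smul])]
    have e1 : (0 + 0 - ((0 : ℕ) : ℤ)) = 0 := by norm_num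
    have e2 : (0 + ((0 : ℕ) : ℤ)) = 0 := by norm_num
    rw [e1, e2, binom_zero_right, pow_zero, one_mul, one_smul]
  have hR2 : (∑ᶠ j : ℕ, ((-1 : ℂ) ^ ((j : ℤ) + 0) * binom 0 j) •
      W.coeff y (0 + 0 - j) (W.coeff x (0 + j) z))
      = W.coeff y 0 (W.coeff x 0 z) := by
    rw [finsum_eq_single _ 0 (fun t ht => by
      rw [binom_zero_ne t ht, mul_zero, zero_smul])]
    have e1 : (0 + 0 - ((0 : ℕ) : ℤ)) = 0 := by norm_num
    have e2 : (0 + ((0 : ℕ) : ℤ)) = 0 := by norm_num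
    have e3 : (-1 : ℂ) ^ (((0 : ℕ) : ℤ) + 0) = 1 := by norm_num
    rw [e1, e2, e3, binom_zero_right, mul_one, one_smul]
  rw [hL, hR1, hR2] at hbor
  exact hbor


end RestrictedVA

/-- In a purely even restricted vertex algebra with `A = V₀`,
`Ω ⊆ V₁` the span of the elements `a∂b` (`a, b ∈ A`), the operation
`_{(0)} : V₁ ⊗ V₁ → V₁` descends to a skew-symmetric bracket on `𝒯 = V₁/Ω` satisfying the
Jacobi identity, i.e. `𝒯` is a Lie algebra.  Concretely: `Ω ⊆ V₁`, the operation preserves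
`V₁`, it maps `Ω ⊗ V₁ + V₁ ⊗ Ω` into `Ω`, it is skew-symmetric modulo `Ω`, and it satisfies
the Jacobi identity modulo `Ω`. -/
theorem quotient_Lie_algebra {V : Type*} [AddCommGroup V] [Module ℂ V]
    (W : RestrictedVA V) :
    (W.Omega ≤ W.wt 1) ∧
    (∀ x y : V, x ∈ W.wt 1 → y ∈ W.wt 1 → W.coeff x 0 y ∈ W.wt 1) ∧
    (∀ x y : V, x ∈ W.Omega → y ∈ W.wt 1 → W.coeff x 0 y ∈ W.Omega ∧ W.coeff y 0 x ∈ W.Omega) ∧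
    (∀ x y : V, x ∈ W.wt 1 → y ∈ W.wt 1 → W.coeff x 0 y + W.coeff y 0 x ∈ W.Omega) ∧
    (∀ x y z : V, x ∈ W.wt 1 → y ∈ W.wt 1 → z ∈ W.wt 1 →
      W.coeff (W.coeff x 0 y) 0 z + W.coeff (W.coeff y 0 z) 0 x +
        W.coeff (W.coeff z 0 x) 0 y ∈ W.Omega) := by
  have part1 : W.Omega ≤ W.wt 1 := by
    apply Submodule.span_le.mpr
    rintro x ⟨a, b, ha, hb, rfl⟩
    have := W.wt_coeff (-1) ha (W.T_mem_wt hb)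
    norm_num at this
    exact this
  have part2 : ∀ x y : V, x ∈ W.wt 1 → y ∈ W.wt 1 → W.coeff x 0 y ∈ W.wt 1 := by
    intro x y hx hy
    have := W.wt_coeff 0 hx hy
    norm_num at this
    exact this
  have part4 : ∀ x y : V, x ∈ W.wt 1 → y ∈ W.wt 1 →
      W.coeff x 0 y + W.coeff y 0 x ∈ W.Omega := by
    intro x y hx hy
    rw [W.skew hx hy]
    apply W.T_mem_Omega
    have := W.wt_coeff 1 hx hy
    norm_num at this
    exact this
  have part3 : ∀ x y : V, x ∈ W.Omega → y ∈ W.wt 1 →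
      W.coeff x 0 y ∈ W.Omega ∧ W.coeff y 0 x ∈ W.Omega := by
    intro x y hx hy
    have h1 : W.coeff x 0 y ∈ W.Omega := by
      induction hx using Submodule.span_induction with
      | mem z hz =>
        obtain ⟨a, b, ha, hb, rfl⟩ := hz
        exact W.gen_act ha hb hy
      | zero =>
        rw [W.coeff_zero_left]
        simp
      | add p q hp hq ihp ihq =>
        rw [W.coeff_add]
        exact Submodule.add_mem _ ihp ihq
      | smul c p hp ihp =>
        rw [W.coeff_smul]
        exact Submodule.smul_mem _ c ihp
    refine ⟨h1, ?_⟩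
    have h2 := part4 x y (part1 hx) hy
    have e : W.coeff y 0 x = (W.coeff x 0 y + W.coeff y 0 x) - W.coeff x 0 y := by abel
    rw [e]
    exact Submodule.sub_mem _ h2 h1
  refine ⟨part1, part2, part3, part4, ?_⟩
  intro x y z hx hy hz
  have hxy := part2 x y hx hy
  have hyz := part2 y z hy hz
  have hzx := part2 z x hz hx
  set S := W.coeff (W.coeff x 0 y) 0 z + W.coeff (W.coeff y 0 z) 0 x +
    W.coeff (W.coeff z 0 x) 0 y with hS
  set J := W.coeff x 0 (W.coeff y 0 z) + W.coeff y 0 (W.coeff z 0 x) +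
    W.coeff z 0 (W.coeff x 0 y) with hJ
  set J' := W.coeff y 0 (W.coeff x 0 z) + W.coeff z 0 (W.coeff y 0 x) +
    W.coeff x 0 (W.coeff z 0 y) with hJ'
  have h1 : S = J - J' := by
    rw [hS, hJ, hJ', W.deriv0 x y z, W.deriv0 y z x, W.deriv0 z x y]
    abel
  have hSJ : S + J ∈ W.Omega := by
    have e : S + J = (W.coeff (W.coeff x 0 y) 0 z + W.coeff z 0 (W.coeff x 0 y))
        + ((W.coeff (W.coeff y 0 z) 0 x + W.coeff x 0 (W.coeff y 0 z))
        + (W.coeff (W.coeff z 0 x) 0 y + W.coeff y 0 (W.coeff z 0 x))) := by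
      rw [hS, hJ]; abel
    rw [e]
    exact Submodule.add_mem _ (part4 _ z hxy hz)
      (Submodule.add_mem _ (part4 _ x hyz hx) (part4 _ y hzx hy))
  have hJJ' : J + J' ∈ W.Omega := by
    have B1 : W.coeff x 0 (W.coeff y 0 z + W.coeff z 0 y) ∈ W.Omega :=
      (part3 _ x (part4 y z hy hz) hx).2
    have B2 : W.coeff y 0 (W.coeff z 0 x + W.coeff x 0 z) ∈ W.Omega :=
      (part3 _ y (part4 z x hz hx) hy).2
    have B3 : W.coeff z 0 (W.coeff x 0 y + W.coeff y 0 x) ∈ W.Omega :=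
      (part3 _ z (part4 x y hx hy) hz).2
    rw [map_add] at B1 B2 B3
    have e : J + J' = (W.coeff x 0 (W.coeff y 0 z) + W.coeff x 0 (W.coeff z 0 y))
        + ((W.coeff y 0 (W.coeff z 0 x) + W.coeff y 0 (W.coeff x 0 z))
        + (W.coeff z 0 (W.coeff x 0 y) + W.coeff z 0 (W.coeff y 0 x))) := by
      rw [hJ, hJ']; abel
    rw [e]
    exact Submodule.add_mem _ B1 (Submodule.add_mem _ B2 B3)
  have key : (3 : ℂ) • S = (S + J) + (S + J) - (J + J') := by
    rw [h1]
    module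
  have h3 : (3 : ℂ) • S ∈ W.Omega := by
    rw [key]
    exact Submodule.sub_mem _ (Submodule.add_mem _ hSJ hSJ) hJJ'
  exact (Submodule.smul_mem_iff _ (by norm_num : (3 : ℂ) ≠ 0)).mp h3
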